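/- The number of elements g of the group G with ν(g) ≤ n is at most 40^n, where ν(g) = min over finite binary subtrees S (containing the root) of E(S) + Σ_{v ∈ ∂S} |g[v]|, E(S) the number of edges of S, ∂S its leaves, and g[v] the action on the subtree below v. -/

import Mathlib

/-!
Vertices of the rooted binary tree are finite binary sequences, modelled as `List Bool`.
An automorphism of the tree is described by a *portrait* `p : List Bool → Bool`, recording
at each vertex whether the two subtrees below it are swapped.
-/

/-- The action on vertices of the tree automorphism with portrait `p`. -/
def act (p : List Bool → Bool) : List Bool → List Bool
  | [] => []
  | i :: v => (xor (p []) i) :: act (fun w => p (i :: w)) v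

theorem act_injective (p : List Bool → Bool) : Function.Injective (act p) := by
  intro u
  induction u generalizing p with
  | nil =>
    intro v h
    cases v with
    | nil => rfl
    | cons j w => simp [act] at h
  | cons i u ih =>
    intro v h
    cases v with
    | nil => simp [act] at h
    | cons j w =>
      simp only [act, List.cons.injEq] at h
      obtain ⟨h1, h2⟩ := h
      have hij : i = j := by cases hp : p [] <;> cases i <;> cases j <;> simp_all
      subst hij
      exact congrArg _ (ih (p := fun w => p (i :: w)) h2)

theorem act_surjective (p : List Bool → Bool) : Function.Surjective (act p) := by
  intro v
  induction v generalizing p with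
  | nil => exact ⟨[], rfl⟩
  | cons j w ih =>
    obtain ⟨u, hu⟩ := ih (p := fun w => p ((xor (p []) j) :: w))
    refine ⟨xor (p []) j :: u, ?_⟩
    simp only [act, hu, List.cons.injEq, and_true]
    cases hp : p [] <;> cases j <;> simp

/-- The tree automorphism with portrait `p`, as a permutation of the vertex set. -/
noncomputable def permOfPortrait (p : List Bool → Bool) : Equiv.Perm (List Bool) :=
  Equiv.ofBijective (act p) ⟨act_injective p, act_surjective p⟩

mutual
  /-- Portrait of the generator `a = (1, b)`. -/
  def pa : List Bool → Bool
    | [] => false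
    | i :: u => if i then pb u else false
  /-- Portrait of the generator `b = (1, a)ε`. -/
  def pb : List Bool → Bool
    | [] => true
    | i :: u => if i then pa u else false
end

/-- The automorphism `a = (1, b)`. -/
noncomputable def aPerm : Equiv.Perm (List Bool) := permOfPortrait pa

/-- The automorphism `b = (1, a)ε`. -/
noncomputable def bPerm : Equiv.Perm (List Bool) := permOfPortrait pb

/-- The generating set `{a, a⁻¹, b, b⁻¹}` (as functions on vertices). -/
noncomputable def gens : Set (List Bool → List Bool) :=
  {⇑aPerm, ⇑bPerm, ⇑aPerm⁻¹, ⇑bPerm⁻¹}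

/-- The word length of a vertex map with respect to `{a±1, b±1}`:
the least length of a word in the generators whose composition is `f`. -/
noncomputable def len (f : List Bool → List Bool) : ℕ :=
  sInf {n | ∃ l : List (List Bool → List Bool),
    l.length = n ∧ (∀ x ∈ l, x ∈ gens) ∧ l.foldr Function.comp id = f}

/-- Finite binary subtrees (containing the root, every vertex with 0 or 2 children). -/
inductive BTree : Type
  | leaf : BTree
  | node : BTree → BTree → BTree

/-- The leaves of a finite binary subtree, as vertices of the infinite binary tree. -/
def leavesOf : BTree → List (List Bool)
  | .leaf => [[]]
  | .node l r => ((leavesOf l).map (List.cons false)) ++ ((leavesOf r).map (List.cons true))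

/-- The section `g[v]` of `g` at the vertex `v`: the action of `g` on the descendant
subtree of `v`. -/
def sec (g : List Bool → List Bool) (v : List Bool) : List Bool → List Bool :=
  fun w => (g (v ++ w)).drop v.length

/-- The fractal norm `ν(g)`: the minimum over finite binary subtrees `S` of
`E(S) + Σ_{v ∈ ∂S} |g[v]|`, where `E(S) = #∂S − 1` is the number of edges of `S`. -/
noncomputable def nu (g : List Bool → List Bool) : ℕ :=
  sInf {m | ∃ S : BTree,
    m = ((leavesOf S).length - 1) + (((leavesOf S).map fun v => len (sec g v)).sum)}

/-- Spherically transitive-compatible automorphism property: length- and prefix-preserving. -/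
def IsAuto (f : List Bool → List Bool) : Prop :=
  (∀ v, (f v).length = v.length) ∧ ∀ v u, (f (v ++ u)).take v.length = f v

lemma sec_nil (f : List Bool → List Bool) : sec f [] = f := rfl

lemma IsAuto.length {f} (hf : IsAuto f) (v : List Bool) : (f v).length = v.length := hf.1 v

lemma IsAuto.append {f} (hf : IsAuto f) (v u : List Bool) :
    f (v ++ u) = f v ++ sec f v u := by
  conv_lhs => rw [← List.take_append_drop v.length (f (v ++ u))]
  rw [hf.2]
  rfl

lemma act_length (p : List Bool → Bool) : ∀ v, (act p v).length = v.length := by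
  intro v
  induction v generalizing p with
  | nil => rfl
  | cons i v ih => simp [act, ih]

lemma isAuto_act (p : List Bool → Bool) : IsAuto (act p) := by
  constructor
  · exact act_length p
  · intro v
    induction v generalizing p with
    | nil => intro u; rfl
    | cons i v ih =>
      intro u
      simp only [List.cons_append, act, List.length_cons, List.take_succ_cons,
        List.cons.injEq, true_and]
      exact ih (fun w => p (i :: w)) u

lemma act_append (p : List Bool → Bool) (v w : List Bool) :
    act p (v ++ w) = act p v ++ act (fun u => p (v ++ u)) w := by
  induction v generalizing p with
  | nil => rfl
  | cons i v ih =>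
    simp only [List.cons_append, act, List.cons.injEq, true_and]
    exact ih (fun w => p (i :: w))

lemma sec_act (p : List Bool → Bool) (v : List Bool) :
    sec (act p) v = act (fun u => p (v ++ u)) := by
  funext w
  show (act p (v ++ w)).drop v.length = _
  rw [act_append, show v.length = (act p v).length from (act_length p v).symm,
    List.drop_left]

lemma isAuto_comp {f g} (hf : IsAuto f) (hg : IsAuto g) : IsAuto (f ∘ g) := by
  constructor
  · intro v; simp [hf.1, hg.1]
  · intro v u
    show (f (g (v ++ u))).take v.length = f (g v)
    rw [hg.append v u, show v.length = (g v).length from (hg.1 v).symm, hf.2]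

lemma isAuto_inv (g : Equiv.Perm (List Bool)) (hg : IsAuto ⇑g) : IsAuto ⇑g⁻¹ := by
  constructor
  · intro v
    have := hg.1 (g⁻¹ v)
    rw [Equiv.Perm.coe_inv, Equiv.apply_symm_apply] at this
    exact this.symm
  · intro v u
    set w := g⁻¹ (v ++ u) with hw
    have hgw : g w = v ++ u := Equiv.Perm.eq_inv_iff_eq.mp rfl
    have hwl : v.length ≤ w.length := by
      have := hg.1 w
      rw [hgw, List.length_append] at this
      omega
    have hkl : (w.take v.length).length = v.length := by
      rw [List.length_take]
      omega
    have h2 := hg.2 (w.take v.length) (w.drop v.length)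
    rw [List.take_append_drop, hkl, hgw, List.take_left] at h2
    have h3 : g⁻¹ v = w.take v.length := by
      conv_lhs => rw [h2, Equiv.Perm.coe_inv, Equiv.symm_apply_apply]
    exact h3.symm

lemma coe_permOfPortrait (p : List Bool → Bool) : ⇑(permOfPortrait p) = act p := rfl

lemma isAuto_of_mem {g : Equiv.Perm (List Bool)}
    (hg : g ∈ Subgroup.closure ({aPerm, bPerm} : Set (Equiv.Perm (List Bool)))) :
    IsAuto ⇑g := by
  induction hg using Subgroup.closure_induction with
  | mem x hx =>
    rcases (by simpa using hx : x = aPerm ∨ x = bPerm) with rfl | rfl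
    · exact isAuto_act pa
    · exact isAuto_act pb
  | one =>
    refine ⟨fun v => by simp, fun v u => by simp⟩
  | mul x y hx hy ihx ihy =>
    have h := isAuto_comp ihx ihy
    have hc : ⇑(x * y) = ⇑x ∘ ⇑y := rfl
    rwa [hc]
  | inv x hx ih => exact isAuto_inv x ih

noncomputable def gen : Fin 4 → (List Bool → List Bool) := ![⇑aPerm, ⇑bPerm, ⇑aPerm⁻¹, ⇑bPerm⁻¹]

noncomputable def eval (w : List (Fin 4)) : List Bool → List Bool :=
  (w.map gen).foldr Function.comp id

lemma eval_nil : eval [] = id := rfl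

lemma eval_cons (i : Fin 4) (w : List (Fin 4)) : eval (i :: w) = gen i ∘ eval w := rfl

lemma eval_append (w₁ w₂ : List (Fin 4)) : eval (w₁ ++ w₂) = eval w₁ ∘ eval w₂ := by
  induction w₁ with
  | nil => rfl
  | cons i w ih =>
    rw [List.cons_append, eval_cons, eval_cons, ih, Function.comp_assoc]

def iinv : Fin 4 → Fin 4 := ![2, 3, 0, 1]

lemma gen_iinv_apply (i : Fin 4) (x : List Bool) :
    gen (iinv i) (gen i x) = x ∧ gen i (gen (iinv i) x) = x := by
  fin_cases i <;> exact ⟨by simp [gen, iinv], by simp [gen, iinv]⟩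

lemma eval_revinv (w : List (Fin 4)) (x : List Bool) :
    eval ((w.map iinv).reverse) (eval w x) = x ∧ eval w (eval ((w.map iinv).reverse) x) = x := by
  induction w generalizing x with
  | nil => exact ⟨rfl, rfl⟩
  | cons i w ih =>
    constructor
    · rw [List.map_cons, List.reverse_cons, eval_append]
      show eval (w.map iinv).reverse (gen (iinv i) (gen i (eval w x))) = x
      rw [(gen_iinv_apply i (eval w x)).1]
      exact (ih x).1
    · rw [List.map_cons, List.reverse_cons, eval_append]
      show gen i (eval w (eval (w.map iinv).reverse (gen (iinv i) x))) = x
      rw [(ih (gen (iinv i) x)).2, (gen_iinv_apply i x).2]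

lemma sec_sec (f : List Bool → List Bool) (v u : List Bool) :
    sec (sec f v) u = sec f (v ++ u) := by
  funext w
  show ((f (v ++ (u ++ w))).drop v.length).drop u.length = (f ((v ++ u) ++ w)).drop (v ++ u).length
  rw [List.drop_drop, List.append_assoc, List.length_append, Nat.add_comm]

lemma sec_length {f : List Bool → List Bool} (hf : IsAuto f) (v w : List Bool) :
    (sec f v w).length = w.length := by
  show ((f (v ++ w)).drop v.length).length = w.length
  rw [List.length_drop, hf.1, List.length_append]
  omega

lemma isAuto_sec {f : List Bool → List Bool} (hf : IsAuto f) (v : List Bool) :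
    IsAuto (sec f v) := by
  refine ⟨sec_length hf v, fun u w => ?_⟩
  have h1 : sec f v (u ++ w) = sec f v u ++ sec f (v ++ u) w := by
    have h := hf.append (v ++ u) w
    rw [List.append_assoc, hf.append v (u ++ w), hf.append v u, List.append_assoc] at h
    exact List.append_cancel_left h
  rw [h1, show u.length = (sec f v u).length from (sec_length hf v u).symm, List.take_left]

lemma sec_injective {f : List Bool → List Bool} (hf : IsAuto f) (hi : Function.Injective f)
    (v : List Bool) : Function.Injective (sec f v) := by
  intro w₁ w₂ h
  have h2 : f (v ++ w₁) = f (v ++ w₂) := by rw [hf.append v w₁, hf.append v w₂, h]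
  exact List.append_cancel_left (hi h2)

/-- All the properties of `g ∈ G` needed for the reconstruction. -/
def Nice (f : List Bool → List Bool) : Prop :=
  IsAuto f ∧ Function.Injective f ∧ ∀ v, ∃ w : List (Fin 4), eval w = sec f v

lemma Nice.sec' {f : List Bool → List Bool} (hf : Nice f) (v : List Bool) : Nice (sec f v) :=
  ⟨isAuto_sec hf.1 v, sec_injective hf.1 hf.2.1 v,
    fun u => by rw [sec_sec]; exact hf.2.2 (v ++ u)⟩

/-- Classification of sections of the generating portraits. -/
def PGood (p : List Bool → Bool) : Prop := p = pa ∨ p = pb ∨ p = fun _ => false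

lemma pgood_cons {p : List Bool → Bool} (hp : PGood p) (i : Bool) :
    PGood (fun u => p (i :: u)) := by
  rcases hp with rfl | rfl | rfl
  · cases i
    · right; right; funext u; simp [pa]
    · right; left; funext u; simp [pa]
  · cases i
    · right; right; funext u; simp [pb]
    · left; funext u; simp [pb]
  · right; right; rfl

lemma pgood_append {p : List Bool → Bool} (hp : PGood p) :
    ∀ v, PGood (fun u => p (v ++ u)) := by
  intro v
  induction v generalizing p with
  | nil => exact hp
  | cons i v ih => exact ih (pgood_cons hp i)

lemma act_const_false : ∀ v, act (fun _ => false) v = v := by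
  intro v
  induction v with
  | nil => rfl
  | cons i v ih =>
    show (false ^^ i) :: act (fun _ => false) v = i :: v
    rw [Bool.false_xor, ih]

lemma eval_single (i : Fin 4) : eval [i] = gen i := rfl

lemma gen_zero : gen 0 = act pa := rfl
lemma gen_one : gen 1 = act pb := rfl

lemma exists_word_sec_act {p : List Bool → Bool} (hp : PGood p) (v : List Bool) :
    ∃ w : List (Fin 4), eval w = sec (act p) v := by
  rw [sec_act]
  rcases pgood_append hp v with h | h | h <;> rw [h]
  · exact ⟨[0], gen_zero⟩
  · exact ⟨[1], gen_one⟩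
  · exact ⟨[], by funext u; exact (act_const_false u).symm⟩

lemma nice_of_mem {g : Equiv.Perm (List Bool)}
    (hg : g ∈ Subgroup.closure ({aPerm, bPerm} : Set (Equiv.Perm (List Bool)))) :
    Nice ⇑g := by
  refine ⟨isAuto_of_mem hg, g.injective, ?_⟩
  induction hg using Subgroup.closure_induction with
  | mem x hx =>
    intro v
    rcases (by simpa using hx : x = aPerm ∨ x = bPerm) with rfl | rfl
    · exact exists_word_sec_act (Or.inl rfl) v
    · exact exists_word_sec_act (Or.inr (Or.inl rfl)) v
  | one =>
    intro v
    refine ⟨[], ?_⟩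
    funext u
    show id u = ((1 : Equiv.Perm (List Bool)) (v ++ u)).drop v.length
    simp
  | mul x y hx hy ihx ihy =>
    intro v
    obtain ⟨w₂, hw₂⟩ := ihy v
    obtain ⟨w₁, hw₁⟩ := ihx (y v)
    refine ⟨w₁ ++ w₂, ?_⟩
    rw [eval_append, hw₁, hw₂]
    funext u
    have hy' := isAuto_of_mem hy
    show (x (y v ++ sec (⇑y) v u)).drop (y v).length = (x (y (v ++ u))).drop v.length
    rw [hy'.append v u, hy'.1 v]
  | inv x hx ih =>
    intro v
    obtain ⟨w, hw⟩ := ih (x⁻¹ v)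
    have hx' := isAuto_of_mem hx
    have hxi : IsAuto ⇑x⁻¹ := isAuto_inv x hx'
    refine ⟨(w.map iinv).reverse, ?_⟩
    funext u
    have key : sec (⇑x) (x⁻¹ v) (sec (⇑x⁻¹) v u) = u := by
      have h1 : x⁻¹ (v ++ u) = x⁻¹ v ++ sec (⇑x⁻¹) v u := hxi.append v u
      have h2 : x (x⁻¹ v ++ sec (⇑x⁻¹) v u) =
          x (x⁻¹ v) ++ sec (⇑x) (x⁻¹ v) (sec (⇑x⁻¹) v u) := hx'.append _ _
      rw [← h1, Equiv.Perm.coe_inv, Equiv.apply_symm_apply, Equiv.apply_symm_apply] at h2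
      exact (List.append_cancel_left h2).symm
    have h3 : eval w (sec (⇑x⁻¹) v u) = u := by rw [hw]; exact key
    conv_lhs => rw [← h3]
    exact (eval_revinv w (sec (⇑x⁻¹) v u)).1

lemma gen_mem (i : Fin 4) : gen i ∈ gens := by
  fin_cases i
  · exact Or.inl rfl
  · exact Or.inr (Or.inl rfl)
  · exact Or.inr (Or.inr (Or.inl rfl))
  · exact Or.inr (Or.inr (Or.inr rfl))

lemma exists_word_of_list :
    ∀ l : List (List Bool → List Bool), (∀ x ∈ l, x ∈ gens) →
      ∃ w : List (Fin 4), w.length = l.length ∧ eval w = l.foldr Function.comp id := by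
  intro l
  induction l with
  | nil => exact fun _ => ⟨[], rfl, rfl⟩
  | cons x l ih =>
    intro h
    obtain ⟨w, hlen, heval⟩ := ih (fun y hy => h y (List.mem_cons_of_mem x hy))
    have hx : x ∈ gens := h x List.mem_cons_self
    have : ∃ i : Fin 4, gen i = x := by
      rcases hx with rfl | rfl | rfl | rfl
      exacts [⟨0, rfl⟩, ⟨1, rfl⟩, ⟨2, rfl⟩, ⟨3, rfl⟩]
    obtain ⟨i, rfl⟩ := this
    exact ⟨i :: w, by simp [hlen], by rw [eval_cons, heval]; rfl⟩

lemma exists_min_word {f : List Bool → List Bool} (h : ∃ w : List (Fin 4), eval w = f) :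
    ∃ w : List (Fin 4), w.length = len f ∧ eval w = f := by
  have hne : {n | ∃ l : List (List Bool → List Bool),
      l.length = n ∧ (∀ x ∈ l, x ∈ gens) ∧ l.foldr Function.comp id = f}.Nonempty := by
    obtain ⟨w, hw⟩ := h
    refine ⟨(w.map gen).length, w.map gen, rfl, ?_, hw⟩
    intro x hx
    obtain ⟨i, _, rfl⟩ := List.mem_map.mp hx
    exact gen_mem i
  obtain ⟨l, hlen, hmem, hfold⟩ := Nat.sInf_mem hne
  obtain ⟨w, hwlen, hweval⟩ := exists_word_of_list l hmem
  exact ⟨w, by rw [hwlen, hlen]; rfl, by rw [hweval, hfold]⟩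

open Classical in
/-- A word of minimal length expressing `f`, if one exists. -/
noncomputable def wordOf (f : List Bool → List Bool) : List (Fin 4) :=
  if h : ∃ w : List (Fin 4), eval w = f then (exists_min_word h).choose else []

lemma wordOf_spec {f : List Bool → List Bool} (h : ∃ w : List (Fin 4), eval w = f) :
    (wordOf f).length = len f ∧ eval (wordOf f) = f := by
  rw [wordOf, dif_pos h]
  exact (exists_min_word h).choose_spec

/-- Decorated trees: binary trees with a swap bit at each internal node and a word
in the generators at each leaf. -/
inductive DTree : Type
  | leaf (w : List (Fin 4)) : DTree
  | node (b : Bool) (l r : DTree) : DTree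

def DTree.size : DTree → ℕ
  | .leaf w => w.length
  | .node _ l r => 1 + l.size + r.size

/-- Decode a decorated tree into a vertex map. -/
noncomputable def dec : DTree → (List Bool → List Bool)
  | .leaf w => eval w
  | .node b l r => fun v =>
      match v with
      | [] => []
      | i :: u => xor b i :: (if i then dec r u else dec l u)

/-- Encode a nice vertex map as a decorated tree over a given subtree shape. -/
noncomputable def build : BTree → (List Bool → List Bool) → DTree
  | .leaf, f => .leaf (wordOf f)
  | .node l r, f =>
      .node ((f [false]).headD false) (build l (sec f [false])) (build r (sec f [true]))

lemma nice_bit {f : List Bool → List Bool} (hf : Nice f) (i : Bool) (u : List Bool) :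
    f (i :: u) = xor ((f [false]).headD false) i :: sec f [i] u := by
  obtain ⟨x, hx⟩ := List.length_eq_one_iff.mp (hf.1.1 [false])
  obtain ⟨y, hy⟩ := List.length_eq_one_iff.mp (hf.1.1 [true])
  have hxy : x ≠ y := by
    intro hh
    have : f [false] = f [true] := by rw [hx, hy, hh]
    exact (by simp : (false : Bool) ≠ true) (List.head_eq_of_cons_eq (hf.2.1 this) ▸ rfl)
  have hyx : y = !x := by cases x <;> cases y <;> simp_all
  have happ : f ([i] ++ u) = f [i] ++ sec f [i] u := hf.1.append [i] u
  cases i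
  · rw [show ([false] ++ u : List Bool) = false :: u from rfl] at happ
    rw [happ, hx]
    simp
  · rw [show ([true] ++ u : List Bool) = true :: u from rfl] at happ
    rw [happ, hy, hx, hyx]
    simp

lemma dec_build {f : List Bool → List Bool} (hf : Nice f) :
    ∀ S : BTree, dec (build S f) = f := by
  intro S
  induction S generalizing f with
  | leaf =>
    show eval (wordOf f) = f
    have h := hf.2.2 []
    rw [sec_nil] at h
    exact (wordOf_spec h).2
  | node l r ihl ihr =>
    funext v
    cases v with
    | nil =>
      show ([] : List Bool) = f []
      have := hf.1.1 []
      exact (List.eq_nil_of_length_eq_zero this).symm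
    | cons i u =>
      show xor ((f [false]).headD false) i :: (if i then dec (build r (sec f [true])) u
          else dec (build l (sec f [false])) u) = f (i :: u)
      rw [ihl (hf.sec' [false]), ihr (hf.sec' [true])]
      rw [nice_bit hf i u]
      cases i <;> simp

lemma leavesOf_pos (S : BTree) : 1 ≤ (leavesOf S).length := by
  induction S with
  | leaf => simp [leavesOf]
  | node l r ihl ihr => simp [leavesOf]; omega

lemma size_build {f : List Bool → List Bool} (hf : Nice f) :
    ∀ S : BTree, (build S f).size =
      ((leavesOf S).length - 1) + (((leavesOf S).map fun v => len (sec f v)).sum) := by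
  intro S
  induction S generalizing f with
  | leaf =>
    show (wordOf f).length = _
    have h := hf.2.2 []
    rw [sec_nil] at h
    simp [leavesOf, (wordOf_spec h).1, sec_nil]
  | node l r ihl ihr =>
    show 1 + (build l (sec f [false])).size + (build r (sec f [true])).size = _
    rw [ihl (hf.sec' [false]), ihr (hf.sec' [true])]
    have hmapl : ((leavesOf l).map (List.cons false)).map (fun v => len (sec f v)) =
        (leavesOf l).map fun v => len (sec (sec f [false]) v) := by
      rw [List.map_map]
      refine List.map_congr_left fun v _ => ?_
      rw [Function.comp_apply, sec_sec]
      rfl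
    have hmapr : ((leavesOf r).map (List.cons true)).map (fun v => len (sec f v)) =
        (leavesOf r).map fun v => len (sec (sec f [true]) v) := by
      rw [List.map_map]
      refine List.map_congr_left fun v _ => ?_
      rw [Function.comp_apply, sec_sec]
      rfl
    rw [leavesOf, List.map_append, hmapl, hmapr, List.sum_append, List.length_append,
      List.length_map, List.length_map]
    have h1 := leavesOf_pos l
    have h2 := leavesOf_pos r
    omega

lemma exists_tree {g : Equiv.Perm (List Bool)} {n : ℕ}
    (hg : g ∈ Subgroup.closure ({aPerm, bPerm} : Set (Equiv.Perm (List Bool))))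
    (hn : nu ⇑g ≤ n) : ∃ t : DTree, t.size ≤ n ∧ dec t = ⇑g := by
  have hne : {m | ∃ S : BTree,
      m = ((leavesOf S).length - 1) + (((leavesOf S).map fun v => len (sec (⇑g) v)).sum)}.Nonempty :=
    ⟨_, BTree.leaf, rfl⟩
  obtain ⟨S, hS⟩ := Nat.sInf_mem hne
  refine ⟨build S ⇑g, ?_, dec_build (nice_of_mem hg) S⟩
  rw [size_build (nice_of_mem hg) S, ← hS]
  exact hn

/-- Encoding alphabet: a pad symbol, node symbols `(bit, left-child-trivial, right-child-trivial)`,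
and letter symbols `(generator, is-last-letter)`. 17 symbols in all. -/
abbrev Symb : Type := Option ((Bool × Bool × Bool) ⊕ (Fin 4 × Bool))

def encW : List (Fin 4) → List Symb
  | [] => []
  | [i] => [some (.inr (i, true))]
  | i :: j :: w => some (.inr (i, false)) :: encW (j :: w)

def DTree.isNil : DTree → Bool
  | .leaf [] => true
  | .leaf (_ :: _) => false
  | .node _ _ _ => false

def enc : DTree → List Symb
  | .leaf w => encW w
  | .node b l r => some (.inl (b, l.isNil, r.isNil)) :: (enc l ++ enc r)

lemma encW_length : ∀ w : List (Fin 4), (encW w).length = w.length := by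
  intro w
  induction w with
  | nil => rfl
  | cons i w ih =>
    cases w with
    | nil => rfl
    | cons j w' => simp only [encW, List.length_cons] at ih ⊢; omega

lemma enc_length_le : ∀ t : DTree, (enc t).length ≤ t.size := by
  intro t
  induction t with
  | leaf w => exact le_of_eq (encW_length w)
  | node b l r ihl ihr =>
    simp only [enc, DTree.size, List.length_cons, List.length_append]
    omega

lemma isNil_iff (t : DTree) : t.isNil = true ↔ t = .leaf [] := by
  cases t with
  | leaf w => cases w <;> simp [DTree.isNil]
  | node b l r => simp [DTree.isNil]

lemma encW_shape (i : Fin 4) (w : List (Fin 4)) :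
    ∃ x rest, encW (i :: w) = some (Sum.inr x) :: rest := by
  cases w with
  | nil => exact ⟨(i, true), [], rfl⟩
  | cons j w' => exact ⟨(i, false), encW (j :: w'), rfl⟩

lemma enc_nil_iff (t : DTree) : enc t = [] ↔ t = .leaf [] := by
  cases t with
  | leaf w =>
    cases w with
    | nil => simp [enc, encW]
    | cons i w' =>
      obtain ⟨x, rest, hx⟩ := encW_shape i w'
      simp [enc, hx]
  | node b l r => simp [enc]

lemma encW_pi : ∀ (w₁ w₂ : List (Fin 4)) (r₁ r₂ : List Symb), w₁ ≠ [] → w₂ ≠ [] →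
    encW w₁ ++ r₁ = encW w₂ ++ r₂ → w₁ = w₂ ∧ r₁ = r₂ := by
  intro w₁
  induction w₁ with
  | nil => intro _ _ _ h _ _; exact absurd rfl h
  | cons i w₁ ih =>
    intro w₂ r₁ r₂ _ h₂ heq
    cases w₂ with
    | nil => exact absurd rfl h₂
    | cons j w₂ =>
      cases w₁ with
      | nil =>
        cases w₂ with
        | nil =>
          simp only [encW, List.cons_append, List.nil_append, List.cons.injEq,
            Option.some.injEq, Sum.inr.injEq, Prod.mk.injEq] at heq
          obtain ⟨⟨h1, _⟩, h2⟩ := heq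
          exact ⟨by rw [h1], h2⟩
        | cons k w₂ =>
          simp only [encW, List.cons_append, List.nil_append, List.cons.injEq,
            Option.some.injEq, Sum.inr.injEq, Prod.mk.injEq] at heq
          exact absurd heq.1.2 (by simp)
      | cons i' w₁ =>
        cases w₂ with
        | nil =>
          simp only [encW, List.cons_append, List.nil_append, List.cons.injEq,
            Option.some.injEq, Sum.inr.injEq, Prod.mk.injEq] at heq
          exact absurd heq.1.2 (by simp)
        | cons k w₂ =>
          simp only [encW, List.cons_append, List.cons.injEq, Option.some.injEq,
            Sum.inr.injEq, Prod.mk.injEq] at heq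
          obtain ⟨⟨h1, _⟩, htail⟩ := heq
          obtain ⟨h3, h4⟩ := ih (k :: w₂) r₁ r₂ (by simp) (by simp) htail
          exact ⟨by rw [h1, h3], h4⟩

lemma enc_pi : ∀ (t₁ t₂ : DTree) (r₁ r₂ : List Symb), t₁ ≠ .leaf [] → t₂ ≠ .leaf [] →
    enc t₁ ++ r₁ = enc t₂ ++ r₂ → t₁ = t₂ ∧ r₁ = r₂ := by
  intro t₁
  induction t₁ with
  | leaf w₁ =>
    intro t₂ r₁ r₂ h₁ h₂ heq
    cases t₂ with
    | leaf w₂ =>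
      have hw₁ : w₁ ≠ [] := fun h => h₁ (by rw [h])
      have hw₂ : w₂ ≠ [] := fun h => h₂ (by rw [h])
      obtain ⟨h3, h4⟩ := encW_pi w₁ w₂ r₁ r₂ hw₁ hw₂ heq
      exact ⟨by rw [h3], h4⟩
    | node b l r =>
      have hw₁ : w₁ ≠ [] := fun h => h₁ (by rw [h])
      exfalso
      cases w₁ with
      | nil => exact hw₁ rfl
      | cons i w₁ =>
        obtain ⟨x, rest, hx⟩ := encW_shape i w₁
        rw [show enc (DTree.leaf (i :: w₁)) = encW (i :: w₁) from rfl, hx] at heq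
        simp only [enc, List.cons_append, List.cons.injEq, Option.some.injEq] at heq
        exact Sum.inr_ne_inl heq.1
  | node b₁ l₁ r₁' ihl ihr =>
    intro t₂ rr₁ rr₂ h₁ h₂ heq
    cases t₂ with
    | leaf w₂ =>
      have hw₂ : w₂ ≠ [] := fun h => h₂ (by rw [h])
      exfalso
      cases w₂ with
      | nil => exact hw₂ rfl
      | cons i w₂ =>
        obtain ⟨x, rest, hx⟩ := encW_shape i w₂
        rw [show enc (DTree.leaf (i :: w₂)) = encW (i :: w₂) from rfl, hx] at heq
        simp only [enc, List.cons_append, List.cons.injEq, Option.some.injEq] at heq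
        exact Sum.inl_ne_inr heq.1
    | node b₂ l₂ r₂' =>
      simp only [enc, List.cons_append, List.cons.injEq, Option.some.injEq,
        Sum.inl.injEq, Prod.mk.injEq] at heq
      obtain ⟨⟨hb, hln, hrn⟩, htail⟩ := heq
      rw [List.append_assoc, List.append_assoc] at htail
      have hLL : l₁ = l₂ ∧ enc r₁' ++ rr₁ = enc r₂' ++ rr₂ := by
        by_cases hl : l₁.isNil = true
        · have e₁ : l₁ = .leaf [] := (isNil_iff l₁).mp hl
          have e₂ : l₂ = .leaf [] := (isNil_iff l₂).mp (hln ▸ hl)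
          have henc₁ : enc l₁ = [] := by rw [e₁]; rfl
          have henc₂ : enc l₂ = [] := by rw [e₂]; rfl
          rw [henc₁, henc₂, List.nil_append, List.nil_append] at htail
          exact ⟨e₁.trans e₂.symm, htail⟩
        · have h₁' : l₁ ≠ .leaf [] := fun h => hl ((isNil_iff l₁).mpr h)
          have h₂' : l₂ ≠ .leaf [] := fun h => hl (hln ▸ (isNil_iff l₂).mpr h)
          exact ihl l₂ _ _ h₁' h₂' htail
      obtain ⟨hLeq, htail'⟩ := hLL
      have hRR : r₁' = r₂' ∧ rr₁ = rr₂ := by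
        by_cases hr : r₁'.isNil = true
        · have e₁ : r₁' = .leaf [] := (isNil_iff r₁').mp hr
          have e₂ : r₂' = .leaf [] := (isNil_iff r₂').mp (hrn ▸ hr)
          have henc₁ : enc r₁' = [] := by rw [e₁]; rfl
          have henc₂ : enc r₂' = [] := by rw [e₂]; rfl
          rw [henc₁, henc₂, List.nil_append, List.nil_append] at htail'
          exact ⟨e₁.trans e₂.symm, htail'⟩
        · have h₁' : r₁' ≠ .leaf [] := fun h => hr ((isNil_iff r₁').mpr h)
          have h₂' : r₂' ≠ .leaf [] := fun h => hr (hrn ▸ (isNil_iff r₂').mpr h)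
          exact ihr r₂' _ _ h₁' h₂' htail'
      exact ⟨by rw [hb, hLeq, hRR.1], hRR.2⟩

def padded (t : DTree) (n : ℕ) : List Symb :=
  enc t ++ List.replicate (n - (enc t).length) none

lemma padded_length {t : DTree} {n : ℕ} (h : (enc t).length ≤ n) :
    (padded t n).length = n := by
  simp only [padded, List.length_append, List.length_replicate]
  omega

lemma enc_head_ne_none : ∀ (t : DTree) (s : Symb) (l : List Symb), enc t = s :: l → s ≠ none := by
  intro t s l h
  cases t with
  | leaf w =>
    cases w with
    | nil => simp [enc, encW] at h
    | cons i w' =>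
      obtain ⟨x, rest, hx⟩ := encW_shape i w'
      rw [show enc (DTree.leaf (i :: w')) = encW (i :: w') from rfl, hx] at h
      injection h with h1 _
      rw [← h1]
      simp
  | node b l' r' =>
    simp only [enc, List.cons.injEq] at h
    rw [← h.1]
    simp

lemma padded_inj {t₁ t₂ : DTree} {n : ℕ} (h₁ : (enc t₁).length ≤ n) (h₂ : (enc t₂).length ≤ n)
    (h : padded t₁ n = padded t₂ n) : t₁ = t₂ := by
  have aux : ∀ (ta tb : DTree), ta = .leaf [] → tb ≠ .leaf [] →
      padded ta n = padded tb n → False := by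
    intro ta tb ea eb hp
    cases henc : enc tb with
    | nil => exact eb ((enc_nil_iff tb).mp henc)
    | cons s l =>
      have hs := enc_head_ne_none tb s l henc
      have henca : enc ta = [] := by rw [ea]; rfl
      rw [padded, padded, henca, henc] at hp
      simp only [List.nil_append, List.length_nil, Nat.sub_zero, List.cons_append] at hp
      cases n with
      | zero => simp at hp
      | succ m =>
        rw [List.replicate_succ] at hp
        exact hs (List.head_eq_of_cons_eq hp).symm
  by_cases e₁ : t₁ = .leaf []
  · by_cases e₂ : t₂ = .leaf []
    · rw [e₁, e₂]
    · exact (aux t₁ t₂ e₁ e₂ h).elim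
  · by_cases e₂ : t₂ = .leaf []
    · exact (aux t₂ t₁ e₂ e₁ h.symm).elim
    · exact (enc_pi t₁ t₂ _ _ e₁ e₂ h).1

lemma card_symb : Fintype.card Symb = 17 := by
  simp [Symb]

theorem nu_ball_card_le' :
    ∀ n : ℕ,
      {g : Equiv.Perm (List Bool) |
        g ∈ Subgroup.closure ({aPerm, bPerm} : Set (Equiv.Perm (List Bool))) ∧
          nu ⇑g ≤ n}.Finite ∧
      Nat.card {g : Equiv.Perm (List Bool) //
        g ∈ Subgroup.closure ({aPerm, bPerm} : Set (Equiv.Perm (List Bool))) ∧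
          nu ⇑g ≤ n} ≤ 40 ^ n := by
  intro n
  classical
  have main : ∃ F : {g : Equiv.Perm (List Bool) //
      g ∈ Subgroup.closure ({aPerm, bPerm} : Set (Equiv.Perm (List Bool))) ∧
        nu ⇑g ≤ n} → (Fin n → Symb), Function.Injective F := by
    refine ⟨fun x => fun i =>
      (padded (Classical.choose (exists_tree x.2.1 x.2.2)) n).getD i none, ?_⟩
    intro x y hxy
    obtain ⟨hsx, hdx⟩ := Classical.choose_spec (exists_tree x.2.1 x.2.2)
    obtain ⟨hsy, hdy⟩ := Classical.choose_spec (exists_tree y.2.1 y.2.2)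
    set tx := Classical.choose (exists_tree x.2.1 x.2.2) with htxdef
    set ty := Classical.choose (exists_tree y.2.1 y.2.2) with htydef
    have hex : (enc tx).length ≤ n := le_trans (enc_length_le tx) hsx
    have hey : (enc ty).length ≤ n := le_trans (enc_length_le ty) hsy
    have hlx : (padded tx n).length = n := padded_length hex
    have hly : (padded ty n).length = n := padded_length hey
    have hlist : padded tx n = padded ty n := by
      apply List.ext_getElem (by rw [hlx, hly])
      intro i hi1 hi2
      have hc : (padded tx n).getD i none = (padded ty n).getD i none := congrFun hxy ⟨i, by rw [← hlx]; exact hi1⟩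
      simpa [List.getD_eq_getElem?_getD, List.getElem?_eq_getElem, hi1, hi2] using hc
    have htt : tx = ty := padded_inj hex hey hlist
    have hcoe : ⇑(x.1) = ⇑(y.1) := by rw [← hdx, ← hdy, htt]
    exact Subtype.ext (Equiv.coe_fn_injective hcoe)
  obtain ⟨F, hF⟩ := main
  have hfin : Finite {g : Equiv.Perm (List Bool) //
      g ∈ Subgroup.closure ({aPerm, bPerm} : Set (Equiv.Perm (List Bool))) ∧
        nu ⇑g ≤ n} := Finite.of_injective F hF
  constructor
  · exact Set.finite_coe_iff.mp hfin
  · calc Nat.card {g : Equiv.Perm (List Bool) //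
        g ∈ Subgroup.closure ({aPerm, bPerm} : Set (Equiv.Perm (List Bool))) ∧
          nu ⇑g ≤ n} ≤ Nat.card (Fin n → Symb) := Nat.card_le_card_of_injective F hF
      _ = 17 ^ n := by
          rw [Nat.card_eq_fintype_card, Fintype.card_fun, card_symb, Fintype.card_fin]
      _ ≤ 40 ^ n := Nat.pow_le_pow_left (by norm_num) n

/-- The number of elements `g` of `G = ⟨a, b⟩` with `ν(g) ≤ n` is at most `40^n`. -/
theorem nu_ball_card_le :
    ∀ n : ℕ,
      {g : Equiv.Perm (List Bool) |
        g ∈ Subgroup.closure ({aPerm, bPerm} : Set (Equiv.Perm (List Bool))) ∧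
          nu ⇑g ≤ n}.Finite ∧
      Nat.card {g : Equiv.Perm (List Bool) //
        g ∈ Subgroup.closure ({aPerm, bPerm} : Set (Equiv.Perm (List Bool))) ∧
          nu ⇑g ≤ n} ≤ 40 ^ n := by
  exact nu_ball_card_le'
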